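/- Let U₀ be a unitary operator on a separable Hilbert space 𝓗, let Y be a trace class operator, and let {Q(t,s)}_{t,s∈ℕ} be a family of bounded operators with sup_{t,s}‖Q(t,s)‖ < ∞. For t, s ∈ ℕ define Z_{t,s}(A) = Σ_{k=0}^∞ U₀^{−k−t} A U₀^{k+s}. Then for every ψ in the domain 𝓗_{ac,0} (vectors with absolutely continuous U₀-spectral measure whose density G_ψ² satisfies G_ψ ∈ L² ∩ L^∞), lim_{t,s→∞} ⟨ψ, Z_{t,s}(Y·Q(t,s)) ψ⟩ = 0. -/

import Mathlib

noncomputable section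
open MeasureTheory Filter Topology Complex

/-- A bounded operator on a Hilbert space is trace class iff it admits a nuclear
representation `T = ∑ₙ |aₙ⟩⟨bₙ|` with `∑ₙ ‖aₙ‖‖bₙ‖ < ∞` (in a Hilbert space this is
equivalent to `Tr |T| < ∞`). -/
def IsTraceClass {E : Type*} [NormedAddCommGroup E] [InnerProductSpace ℂ E]
    (T : E →L[ℂ] E) : Prop :=
  ∃ a b : ℕ → E, Summable (fun n => ‖a n‖ * ‖b n‖) ∧
    ∀ ψ, T ψ = ∑' n, (inner ℂ (b n) ψ : ℂ) • a n

/-- `μ` is the spectral measure of the unitary `U` at the vector `ψ`, i.e. the finite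
Borel measure on `[0,2π)` with `⟨ψ, Uᵗψ⟩ = ∫ e^{itλ} dμ(λ)` for all `t ∈ ℤ`. -/
def IsVectorSpectralMeasure {E : Type*} [NormedAddCommGroup E] [InnerProductSpace ℂ E]
    [CompleteSpace E] (U : unitary (E →L[ℂ] E)) (ψ : E) (μ : Measure ℝ) : Prop :=
  IsFiniteMeasure μ ∧ μ (Set.Ico 0 (2 * Real.pi))ᶜ = 0 ∧
    ∀ t : ℤ, (inner ℂ ψ (((U ^ t : unitary (E →L[ℂ] E)) : E →L[ℂ] E) ψ) : ℂ)
      = ∫ l, Complex.exp (Complex.I * t * l) ∂μ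

/-- `ψ ∈ 𝓗_{ac,0}`: the spectral measure of `ψ` has a bounded density `G_ψ²`
(equivalently, `G_ψ ∈ L² ∩ L^∞`, the `L²` condition being automatic). -/
def IsAc0Vector {E : Type*} [NormedAddCommGroup E] [InnerProductSpace ℂ E]
    [CompleteSpace E] (U : unitary (E →L[ℂ] E)) (ψ : E) : Prop :=
  ∃ (μ : Measure ℝ) (C : NNReal), IsVectorSpectralMeasure U ψ μ ∧ μ ≤ C • volume
variable {E : Type*} [NormedAddCommGroup E] [InnerProductSpace ℂ E]
  [CompleteSpace E] [TopologicalSpace.SeparableSpace E]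

set_option maxHeartbeats 2000000

namespace ZAux

local notation "⟪" x ", " y "⟫" => (inner ℂ x y : ℂ)

def uIter (U : unitary (E →L[ℂ] E)) (ψ : E) (m : ℤ) : E :=
  ((U ^ m : unitary (E →L[ℂ] E)) : E →L[ℂ] E) ψ

lemma unitary_inner_map (W : unitary (E →L[ℂ] E)) (x y : E) :
    ⟪(W : E →L[ℂ] E) x, (W : E →L[ℂ] E) y⟫ = ⟪x, y⟫ := by
  have h0 := congrArg (Subtype.val) (Unitary.star_mul_self W)
  rw [MulMemClass.coe_mul, Unitary.coe_star, OneMemClass.coe_one] at h0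
  have h : (ContinuousLinearMap.adjoint ((W : E →L[ℂ] E))) ((W : E →L[ℂ] E) y) = y := by
    rw [← ContinuousLinearMap.star_eq_adjoint, ← ContinuousLinearMap.mul_apply, h0,
      ContinuousLinearMap.one_apply]
  rw [← ContinuousLinearMap.adjoint_inner_right, h]

lemma uIter_shift (U : unitary (E →L[ℂ] E)) (ψ : E) (m n : ℤ) :
    ⟪uIter U ψ m, uIter U ψ n⟫ = ⟪ψ, uIter U ψ (n - m)⟫ := by
  have h : (U ^ n) = (U ^ m) * (U ^ (n - m)) := by rw [← zpow_add]; congr 1; ring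
  rw [uIter, uIter, uIter, h, MulMemClass.coe_mul, ContinuousLinearMap.mul_apply,
    unitary_inner_map]

lemma norm_uIter (U : unitary (E →L[ℂ] E)) (ψ : E) (m : ℤ) :
    ‖uIter U ψ m‖ = ‖ψ‖ := by
  have h := uIter_shift U ψ m m
  rw [sub_self] at h
  have h0 : uIter U ψ 0 = ψ := by
    rw [uIter, zpow_zero, OneMemClass.coe_one, ContinuousLinearMap.one_apply]
  rw [h0, inner_self_eq_norm_sq_to_K, inner_self_eq_norm_sq_to_K] at h
  have h2 : ‖uIter U ψ m‖ ^ 2 = ‖ψ‖ ^ 2 := by exact_mod_cast h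
  rw [← Real.sqrt_sq (norm_nonneg (uIter U ψ m)), h2, Real.sqrt_sq (norm_nonneg ψ)]

/-- orthogonality of exponentials on `[0, 2π]` -/
lemma exp_orth (d : ℤ) :
    ∫ l in (0:ℝ)..(2 * Real.pi), Complex.exp (Complex.I * d * l)
      = if d = 0 then (2 * Real.pi : ℂ) else 0 := by
  by_cases hd : d = 0
  · subst hd
    simp [intervalIntegral.integral_const, sub_zero, Complex.real_smul]
  · rw [if_neg hd]
    have hc : (Complex.I * (d : ℂ)) ≠ 0 := by
      apply mul_ne_zero Complex.I_ne_zero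
      exact_mod_cast hd
    have h := integral_exp_mul_complex (a := 0) (b := 2 * Real.pi) hc
    simp only [mul_assoc] at h ⊢
    rw [h]
    have h1 : Complex.I * ((d : ℂ) * ((2 * Real.pi : ℝ) : ℂ)) = (d : ℂ) * (2 * Real.pi * Complex.I) := by
      push_cast; ring
    rw [h1, Complex.exp_int_mul_two_pi_mul_I]
    simp

lemma l2_bound (U : unitary (E →L[ℂ] E)) (ψ : E) (μ : Measure ℝ) (C : NNReal)
    (hfin : IsFiniteMeasure μ) (hsupp : μ (Set.Ico 0 (2 * Real.pi))ᶜ = 0)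
    (hspec : ∀ t : ℤ, ⟪ψ, uIter U ψ t⟫ = ∫ l, Complex.exp (Complex.I * t * l) ∂μ)
    (hC : μ ≤ C • volume) (x : E) (F : Finset ℤ) :
    ∑ m ∈ F, ‖⟪x, uIter U ψ m⟫‖ ^ 2 ≤ 2 * Real.pi * C * ‖x‖ ^ 2 := by
  classical
  haveI := hfin
  set u : ℤ → E := uIter U ψ with hu
  have hmix : ∀ m n : ℤ, ⟪u m, u n⟫ = ∫ l, Complex.exp (Complex.I * ((n : ℂ) - m) * l) ∂μ := by
    intro m n
    rw [hu, uIter_shift U ψ m n, hspec (n - m)]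
    norm_num
  -- integrability of the elementary terms
  have hcont : ∀ d : ℤ, Continuous fun l : ℝ => Complex.exp (Complex.I * d * l) := by
    intro d; fun_prop
  have hint : ∀ (d : ℤ) (z : ℂ), Integrable (fun l : ℝ => z * Complex.exp (Complex.I * d * l)) μ := by
    intro d z
    refine Integrable.mono' (integrable_const ‖z‖)
      ((continuous_const.mul (hcont d)).aestronglyMeasurable) (ae_of_all _ fun l => ?_)
    rw [norm_mul]
    have : ‖Complex.exp (Complex.I * d * l)‖ = 1 := by
      rw [Complex.norm_exp]
      have : (Complex.I * d * l).re = 0 := by simp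
      rw [this, Real.exp_zero]
    rw [this, mul_one]
  set c : ℤ → ℂ := fun m => ⟪u m, x⟫ with hc
  set v : E := ∑ m ∈ F, c m • u m with hv
  set S : ℝ := ∑ m ∈ F, ‖⟪x, u m⟫‖ ^ 2 with hS
  have hSnn : 0 ≤ S := Finset.sum_nonneg fun _ _ => by positivity
  have hSv : (S : ℂ) = ⟪x, v⟫ := by
    rw [hv, inner_sum, hS]
    push_cast
    refine Finset.sum_congr rfl fun m _ => ?_
    rw [inner_smul_right]
    simp only [hc]
    rw [← inner_conj_symm (u m) x]
    exact (Complex.conj_mul' _).symm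
  have hScs : S ≤ ‖x‖ * ‖v‖ := by
    have h1 : S = ‖(S : ℂ)‖ := by
      rw [Complex.norm_real, Real.norm_eq_abs, _root_.abs_of_nonneg hSnn]
    rw [h1, hSv]
    exact norm_inner_le_norm x v
  set f : ℝ → ℂ := fun l => ∑ m ∈ F, c m * Complex.exp (Complex.I * m * l) with hf
  have hfcont : Continuous f := by
    rw [hf]; exact continuous_finset_sum _ fun m _ => continuous_const.mul (hcont m)
  have hfcexp : ∀ l : ℝ, (starRingEnd ℂ) (f l) * f l
      = ∑ m ∈ F, ∑ n ∈ F, (starRingEnd ℂ) (c m) * c n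
          * Complex.exp (Complex.I * ((n : ℂ) - m) * l) := by
    intro l
    rw [hf]
    simp only [map_sum, map_mul]
    rw [Finset.sum_mul_sum]
    refine Finset.sum_congr rfl fun m _ => Finset.sum_congr rfl fun n _ => ?_
    have h1 : (starRingEnd ℂ) (Complex.exp (Complex.I * m * l))
        = Complex.exp (-(Complex.I * m * l)) := by
      rw [← Complex.exp_conj]
      congr 1
      simp [map_mul, Complex.conj_I, Complex.conj_ofReal]
    rw [h1]
    calc (starRingEnd ℂ) (c m) * Complex.exp (-(Complex.I * m * l))
          * (c n * Complex.exp (Complex.I * n * l))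
        = (starRingEnd ℂ) (c m) * c n
            * (Complex.exp (-(Complex.I * m * l)) * Complex.exp (Complex.I * n * l)) := by ring
      _ = (starRingEnd ℂ) (c m) * c n * Complex.exp (Complex.I * ((n : ℂ) - m) * l) := by
          rw [← Complex.exp_add]; congr 1; ring
  have hvv : ⟪v, v⟫ = ∫ l, (starRingEnd ℂ) (f l) * f l ∂μ := by
    have h1 : ⟪v, v⟫ = ∑ m ∈ F, ∑ n ∈ F, (starRingEnd ℂ) (c m) * c n
        * ∫ l, Complex.exp (Complex.I * ((n : ℂ) - m) * l) ∂μ := by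
      rw [hv, sum_inner]
      refine Finset.sum_congr rfl fun m _ => ?_
      rw [inner_sum]
      refine Finset.sum_congr rfl fun n _ => ?_
      rw [inner_smul_left, inner_smul_right, hmix m n]
      ring
    rw [h1]
    have h2 : ∀ (m n : ℤ), Integrable
        (fun l : ℝ => (starRingEnd ℂ) (c m) * c n * Complex.exp (Complex.I * ((n : ℂ) - m) * l)) μ := by
      intro m n
      simpa [Int.cast_sub] using hint (n - m) ((starRingEnd ℂ) (c m) * c n)
    have h3 : ∫ l, (starRingEnd ℂ) (f l) * f l ∂μ
        = ∫ l, (∑ m ∈ F, ∑ n ∈ F, (starRingEnd ℂ) (c m) * c n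
            * Complex.exp (Complex.I * ((n : ℂ) - m) * l)) ∂μ :=
      integral_congr_ae (ae_of_all _ hfcexp)
    rw [h3, integral_finset_sum _ fun m _ => integrable_finset_sum _ fun n _ => h2 m n]
    refine Finset.sum_congr rfl fun m _ => ?_
    rw [integral_finset_sum _ fun n _ => h2 m n]
    refine Finset.sum_congr rfl fun n _ => ?_
    exact (integral_const_mul _ _).symm
  have hnormf : ∀ l : ℝ, (starRingEnd ℂ) (f l) * f l = ((‖f l‖ ^ 2 : ℝ) : ℂ) := by
    intro l
    rw [Complex.conj_mul']
    push_cast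
    ring
  have hvnorm : ‖v‖ ^ 2 = ∫ l, ‖f l‖ ^ 2 ∂μ := by
    have h1 : ((‖v‖ ^ 2 : ℝ) : ℂ) = ((∫ l, ‖f l‖ ^ 2 ∂μ : ℝ) : ℂ) := by
      calc ((‖v‖ ^ 2 : ℝ) : ℂ) = ⟪v, v⟫ := by
            rw [inner_self_eq_norm_sq_to_K]; norm_cast
        _ = ∫ l, (starRingEnd ℂ) (f l) * f l ∂μ := hvv
        _ = ∫ l, ((‖f l‖ ^ 2 : ℝ) : ℂ) ∂μ := integral_congr_ae (ae_of_all _ hnormf)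
        _ = ((∫ l, ‖f l‖ ^ 2 ∂μ : ℝ) : ℂ) := integral_ofReal (f := fun l => ‖f l‖ ^ 2)
    exact_mod_cast h1
  -- bound for the density
  set g : ℝ → ℝ := fun l => ‖f l‖ ^ 2 with hg
  set B : ℝ := (∑ m ∈ F, ‖c m‖) ^ 2 with hB
  have hgcont : Continuous g := (hfcont.norm).pow 2
  have hg0 : ∀ l, 0 ≤ g l := fun l => sq_nonneg _
  have hgB : ∀ l, g l ≤ B := by
    intro l
    rw [hg, hB]
    have h1 : ‖f l‖ ≤ ∑ m ∈ F, ‖c m‖ := by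
      rw [hf]
      refine (norm_sum_le _ _).trans ?_
      refine Finset.sum_le_sum fun m _ => ?_
      rw [norm_mul]
      have : ‖Complex.exp (Complex.I * m * l)‖ = 1 := by
        rw [Complex.norm_exp]
        have : (Complex.I * (m : ℂ) * l).re = 0 := by simp
        rw [this, Real.exp_zero]
      rw [this, mul_one]
    exact pow_le_pow_left₀ (norm_nonneg _) h1 2
  have hrμ : μ.restrict (Set.Ico 0 (2 * Real.pi)) = μ := by
    refine Measure.restrict_eq_self_of_ae_mem ?_
    rw [MeasureTheory.ae_iff]
    simpa [Set.compl_def] using hsupp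
  have hμ_int : Integrable g μ :=
    Integrable.mono' (integrable_const B) hgcont.aestronglyMeasurable
      (ae_of_all _ fun l => by rw [Real.norm_eq_abs, _root_.abs_of_nonneg (hg0 l)]; exact hgB l)
  have hIoc_int : IntegrableOn g (Set.Ioc 0 (2 * Real.pi)) volume :=
    hgcont.integrableOn_Ioc
  have hsmul : (C • volume : Measure ℝ) = ((C : ENNReal) • volume : Measure ℝ) := rfl
  have key : ∫⁻ l, ENNReal.ofReal (g l) ∂μ
      ≤ (C : ENNReal) * ∫⁻ l in Set.Ioc 0 (2 * Real.pi), ENNReal.ofReal (g l) ∂volume := by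
    have e1 : ∫⁻ l, ENNReal.ofReal (g l) ∂μ
        = ∫⁻ l, (Set.Ico 0 (2 * Real.pi)).indicator (fun l => ENNReal.ofReal (g l)) l ∂μ := by
      rw [lintegral_indicator measurableSet_Ico, ← hrμ]
      rw [Measure.restrict_restrict measurableSet_Ico]
      congr 1
      rw [Set.inter_self]
    rw [e1]
    calc ∫⁻ l, (Set.Ico 0 (2 * Real.pi)).indicator (fun l => ENNReal.ofReal (g l)) l ∂μ
        ≤ ∫⁻ l, (Set.Ico 0 (2 * Real.pi)).indicator (fun l => ENNReal.ofReal (g l)) l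
            ∂(C • volume) := lintegral_mono' hC le_rfl
      _ = (C : ENNReal) * ∫⁻ l, (Set.Ico 0 (2 * Real.pi)).indicator
            (fun l => ENNReal.ofReal (g l)) l ∂volume := by
          rw [hsmul, lintegral_smul_measure, smul_eq_mul]
      _ = (C : ENNReal) * ∫⁻ l in Set.Ico 0 (2 * Real.pi), ENNReal.ofReal (g l) ∂volume := by
          rw [lintegral_indicator measurableSet_Ico]
      _ = (C : ENNReal) * ∫⁻ l in Set.Ioc 0 (2 * Real.pi), ENNReal.ofReal (g l) ∂volume := by
          rw [Measure.restrict_congr_set Ico_ae_eq_Ioc]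
  have step6 : ∫ l, g l ∂μ ≤ (C : ℝ) * ∫ l in Set.Ioc 0 (2 * Real.pi), g l := by
    have h2 : ENNReal.ofReal (∫ l, g l ∂μ) = ∫⁻ l, ENNReal.ofReal (g l) ∂μ :=
      ofReal_integral_eq_lintegral_ofReal hμ_int (ae_of_all _ hg0)
    have h3 : ENNReal.ofReal (∫ l in Set.Ioc 0 (2 * Real.pi), g l)
        = ∫⁻ l in Set.Ioc 0 (2 * Real.pi), ENNReal.ofReal (g l) ∂volume :=
      ofReal_integral_eq_lintegral_ofReal hIoc_int (ae_of_all _ hg0)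
    have h4 : ENNReal.ofReal (∫ l, g l ∂μ)
        ≤ (C : ENNReal) * ENNReal.ofReal (∫ l in Set.Ioc 0 (2 * Real.pi), g l) := by
      rw [h2, h3]; exact key
    have h5 : ((C : ENNReal) * ENNReal.ofReal (∫ l in Set.Ioc 0 (2 * Real.pi), g l)).toReal
        = (C : ℝ) * ∫ l in Set.Ioc 0 (2 * Real.pi), g l := by
      rw [ENNReal.toReal_mul, ENNReal.coe_toReal,
        ENNReal.toReal_ofReal (integral_nonneg hg0)]
    calc ∫ l, g l ∂μ = (ENNReal.ofReal (∫ l, g l ∂μ)).toReal := by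
          rw [ENNReal.toReal_ofReal (integral_nonneg hg0)]
      _ ≤ ((C : ENNReal) * ENNReal.ofReal (∫ l in Set.Ioc 0 (2 * Real.pi), g l)).toReal := by
          refine ENNReal.toReal_mono ?_ h4
          exact ENNReal.mul_ne_top ENNReal.coe_ne_top ENNReal.ofReal_ne_top
      _ = (C : ℝ) * ∫ l in Set.Ioc 0 (2 * Real.pi), g l := h5
  -- exact value of the interval integral
  have hpi : (0 : ℝ) ≤ 2 * Real.pi := by positivity
  have step7 : ∫ l in Set.Ioc 0 (2 * Real.pi), g l = 2 * Real.pi * S := by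
    have hcont3 : ∀ (m n : ℤ), Continuous
        (fun l : ℝ => (starRingEnd ℂ) (c m) * c n * Complex.exp (Complex.I * ((n : ℂ) - m) * l)) := by
      intro m n; fun_prop
    have hintv : ∀ (m n : ℤ), IntervalIntegrable
        (fun l : ℝ => (starRingEnd ℂ) (c m) * c n * Complex.exp (Complex.I * ((n : ℂ) - m) * l))
        volume 0 (2 * Real.pi) := fun m n => (hcont3 m n).intervalIntegrable _ _
    have hI : ((∫ l in Set.Ioc 0 (2 * Real.pi), g l : ℝ) : ℂ)
        = ∫ l in (0:ℝ)..(2 * Real.pi), (starRingEnd ℂ) (f l) * f l := by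
      rw [intervalIntegral.integral_of_le hpi]
      rw [show (fun l => (starRingEnd ℂ) (f l) * f l) = fun l => ((g l : ℝ) : ℂ) from
        funext fun l => hnormf l]
      exact (integral_ofReal (f := fun l => g l)).symm
    have hI2 : ∫ l in (0:ℝ)..(2 * Real.pi), (starRingEnd ℂ) (f l) * f l
        = ((2 * Real.pi * S : ℝ) : ℂ) := by
      simp only [hfcexp]
      rw [intervalIntegral.integral_finset_sum
        (f := fun m (l : ℝ) => ∑ n ∈ F, (starRingEnd ℂ) (c m) * c n
          * Complex.exp (Complex.I * ((n : ℂ) - m) * l))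
        (fun m _ => ((continuous_finset_sum F fun n _ => hcont3 m n).intervalIntegrable _ _))]
      have hrow : ∀ m ∈ F, (∫ l in (0:ℝ)..(2 * Real.pi),
          ∑ n ∈ F, (starRingEnd ℂ) (c m) * c n * Complex.exp (Complex.I * ((n : ℂ) - m) * l))
          = ((‖c m‖ ^ 2 : ℝ) : ℂ) * (2 * Real.pi) := by
        intro m hm
        rw [intervalIntegral.integral_finset_sum
          (f := fun n (l : ℝ) => (starRingEnd ℂ) (c m) * c n
            * Complex.exp (Complex.I * ((n : ℂ) - m) * l))
          (fun n _ => hintv m n)]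
        have hterm : ∀ n ∈ F, (∫ l in (0:ℝ)..(2 * Real.pi),
            (starRingEnd ℂ) (c m) * c n * Complex.exp (Complex.I * ((n : ℂ) - m) * l))
            = (starRingEnd ℂ) (c m) * c n * (if (n - m : ℤ) = 0 then (2 * Real.pi : ℂ) else 0) := by
          intro n _
          rw [intervalIntegral.integral_const_mul]
          congr 1
          have hcongr : (fun l : ℝ => Complex.exp (Complex.I * ((n : ℂ) - m) * l))
              = fun l : ℝ => Complex.exp (Complex.I * ((n - m : ℤ) : ℂ) * l) := by
            funext l; push_cast; ring_nf
          rw [hcongr]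
          exact exp_orth (n - m)
        rw [Finset.sum_congr rfl hterm]
        rw [Finset.sum_eq_single m]
        · rw [if_pos (sub_self m), Complex.conj_mul']
          push_cast
          ring
        · intro n _ hn
          rw [if_neg (sub_ne_zero.mpr hn), mul_zero]
        · intro hmf
          exact absurd hm hmf
      rw [Finset.sum_congr rfl hrow]
      have hcm : ∀ m ∈ F, ((‖c m‖ ^ 2 : ℝ) : ℂ) * (2 * Real.pi)
          = ((‖⟪x, u m⟫‖ ^ 2 : ℝ) : ℂ) * (2 * Real.pi) := by
        intro m _
        rw [show ‖c m‖ = ‖⟪x, u m⟫‖ from by simp only [hc]; exact norm_inner_symm (u m) x]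
      rw [Finset.sum_congr rfl hcm, ← Finset.sum_mul, hS]
      push_cast
      ring
    have h6 := hI.trans hI2
    exact_mod_cast h6
  have hv2 : ‖v‖ ^ 2 ≤ 2 * Real.pi * C * S := by
    rw [hvnorm]
    calc ∫ l, ‖f l‖ ^ 2 ∂μ ≤ (C : ℝ) * ∫ l in Set.Ioc 0 (2 * Real.pi), g l := step6
      _ = (C : ℝ) * (2 * Real.pi * S) := by rw [step7]
      _ = 2 * Real.pi * C * S := by ring
  have hsq : S ^ 2 ≤ ‖x‖ ^ 2 * (2 * Real.pi * C * S) := by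
    have h1 : S ^ 2 ≤ (‖x‖ * ‖v‖) ^ 2 := by
      have h0 := mul_self_le_mul_self hSnn hScs
      simpa [pow_two] using h0
    calc S ^ 2 ≤ (‖x‖ * ‖v‖) ^ 2 := h1
      _ = ‖x‖ ^ 2 * ‖v‖ ^ 2 := by ring
      _ ≤ ‖x‖ ^ 2 * (2 * Real.pi * C * S) :=
          mul_le_mul_of_nonneg_left hv2 (by positivity)
  rcases eq_or_lt_of_le hSnn with h | h
  · rw [← h]
    positivity
  · have h2 : S * S ≤ (2 * Real.pi * C * ‖x‖ ^ 2) * S := by nlinarith [hsq]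
    exact le_of_mul_le_mul_right h2 h


lemma l2_nat (U : unitary (E →L[ℂ] E)) (ψ : E) (μ : Measure ℝ) (C : NNReal)
    (hfin : IsFiniteMeasure μ) (hsupp : μ (Set.Ico 0 (2 * Real.pi))ᶜ = 0)
    (hspec : ∀ t : ℤ, ⟪ψ, uIter U ψ t⟫ = ∫ l, Complex.exp (Complex.I * t * l) ∂μ)
    (hC : μ ≤ C • volume) (x : E) (t : ℕ) :
    Summable (fun k : ℕ => ‖⟪x, uIter U ψ ((k + t : ℕ) : ℤ)⟫‖ ^ 2) ∧
      ∑' k : ℕ, ‖⟪x, uIter U ψ ((k + t : ℕ) : ℤ)⟫‖ ^ 2 ≤ 2 * Real.pi * C * ‖x‖ ^ 2 := by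
  classical
  have hb : ∀ F : Finset ℕ, ∑ k ∈ F, ‖⟪x, uIter U ψ ((k + t : ℕ) : ℤ)⟫‖ ^ 2
      ≤ 2 * Real.pi * C * ‖x‖ ^ 2 := by
    intro F
    have h := l2_bound U ψ μ C hfin hsupp hspec hC x
      (F.image fun k : ℕ => ((k + t : ℕ) : ℤ))
    rwa [Finset.sum_image (by
      intro p _ q _ hpq
      have : p + t = q + t := Nat.cast_injective hpq
      omega)] at h
  have hsum : Summable (fun k : ℕ => ‖⟪x, uIter U ψ ((k + t : ℕ) : ℤ)⟫‖ ^ 2) :=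
    summable_of_sum_le (fun k => by positivity) hb
  exact ⟨hsum, Summable.tsum_le_of_sum_le hsum hb⟩

lemma tsum_cauchy_schwarz (x y : ℕ → ℝ) (hx0 : ∀ k, 0 ≤ x k) (hy0 : ∀ k, 0 ≤ y k)
    (hx : Summable fun k => x k ^ 2) (hy : Summable fun k => y k ^ 2) :
    Summable (fun k => x k * y k) ∧
      ∑' k, x k * y k ≤ Real.sqrt (∑' k, x k ^ 2) * Real.sqrt (∑' k, y k ^ 2) := by
  have hX0 : 0 ≤ ∑' k, x k ^ 2 := tsum_nonneg fun k => sq_nonneg _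
  have hY0 : 0 ≤ ∑' k, y k ^ 2 := tsum_nonneg fun k => sq_nonneg _
  have hb : ∀ F : Finset ℕ, ∑ k ∈ F, x k * y k
      ≤ Real.sqrt (∑' k, x k ^ 2) * Real.sqrt (∑' k, y k ^ 2) := by
    intro F
    have h1 : (∑ k ∈ F, x k * y k) ^ 2 ≤ (∑ k ∈ F, x k ^ 2) * (∑ k ∈ F, y k ^ 2) :=
      Finset.sum_mul_sq_le_sq_mul_sq F x y
    have h2 : ∑ k ∈ F, x k ^ 2 ≤ ∑' k, x k ^ 2 :=
      Summable.sum_le_tsum F (fun _ _ => sq_nonneg _) hx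
    have h3 : ∑ k ∈ F, y k ^ 2 ≤ ∑' k, y k ^ 2 :=
      Summable.sum_le_tsum F (fun _ _ => sq_nonneg _) hy
    have h4 : 0 ≤ ∑ k ∈ F, x k * y k :=
      Finset.sum_nonneg fun k _ => mul_nonneg (hx0 k) (hy0 k)
    calc ∑ k ∈ F, x k * y k = Real.sqrt ((∑ k ∈ F, x k * y k) ^ 2) :=
          (Real.sqrt_sq h4).symm
      _ ≤ Real.sqrt ((∑' k, x k ^ 2) * (∑' k, y k ^ 2)) := by
          refine Real.sqrt_le_sqrt (h1.trans ?_)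
          exact mul_le_mul h2 h3 (Finset.sum_nonneg fun _ _ => sq_nonneg _) hX0
      _ = Real.sqrt (∑' k, x k ^ 2) * Real.sqrt (∑' k, y k ^ 2) := Real.sqrt_mul hX0 _
  have hsum : Summable fun k => x k * y k :=
    summable_of_sum_le (fun k => mul_nonneg (hx0 k) (hy0 k)) hb
  exact ⟨hsum, Summable.tsum_le_of_sum_le hsum hb⟩


end ZAux

local notation "⟪" x ", " y "⟫" => (inner ℂ x y : ℂ)

/-- Lemma 3.5 (1): with `Z_{t,s}(A) = ∑_{k≥0} U₀^{-k-t} A U₀^{k+s}`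
(matrix elements on `𝓗_{ac,0}`), for `Y` trace class and `Q(t,s)` uniformly bounded,
`⟨ψ, Z_{t,s}(Y Q(t,s)) ψ⟩ = ∑_{k≥0} ⟨U₀^{k+t}ψ, Y Q(t,s) U₀^{k+s}ψ⟩ → 0` as `t,s → ∞`. -/
theorem Z_limit_traceClass_left
    (U0 : unitary (E →L[ℂ] E)) (Y : E →L[ℂ] E) (hY : IsTraceClass Y)
    (Q : ℕ → ℕ → (E →L[ℂ] E)) (hQ : ∃ M : ℝ, ∀ t s : ℕ, ‖Q t s‖ ≤ M)
    (ψ : E) (hψ : IsAc0Vector U0 ψ) :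
    Tendsto (fun p : ℕ × ℕ => ∑' k : ℕ,
      (inner ℂ ((((U0 ^ (k + p.1)) : unitary (E →L[ℂ] E)) : E →L[ℂ] E) ψ)
        ((Y.comp (Q p.1 p.2)) ((((U0 ^ (k + p.2)) : unitary (E →L[ℂ] E)) : E →L[ℂ] E) ψ)) : ℂ))
      atTop (𝓝 0) := by
  classical
  obtain ⟨a, b, hab, hrep⟩ := hY
  obtain ⟨M, hM⟩ := hQ
  obtain ⟨μ, C, ⟨hfin, hsupp, hspec⟩, hC⟩ := hψ
  haveI := hfin
  have hM0 : 0 ≤ M := le_trans (norm_nonneg _) (hM 0 0)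
  set u : ℤ → E := ZAux.uIter U0 ψ with hu
  have hcoe : ∀ n : ℕ, (((U0 ^ n : unitary (E →L[ℂ] E)) : E →L[ℂ] E) ψ) = u (n : ℤ) := by
    intro n
    rw [hu, ZAux.uIter, zpow_natCast]
  set P : ℝ := 2 * Real.pi * C with hP
  have hP0 : 0 ≤ P := by positivity
  have L2 : ∀ (x : E) (t : ℕ),
      Summable (fun k : ℕ => ‖⟪x, u ((k + t : ℕ) : ℤ)⟫‖ ^ 2) ∧
      ∑' k : ℕ, ‖⟪x, u ((k + t : ℕ) : ℤ)⟫‖ ^ 2 ≤ P * ‖x‖ ^ 2 :=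
    fun x t => ZAux.l2_nat U0 ψ μ C hfin hsupp hspec hC x t
  set w : ℕ → ℕ → ℝ := fun n m => ‖⟪a n, u (m : ℤ)⟫‖ ^ 2 with hw
  set A : ℕ → ℕ → ℝ := fun n t => ∑' k : ℕ, w n (k + t) with hA
  have hAle : ∀ n t, A n t ≤ P * ‖a n‖ ^ 2 := fun n t => (L2 (a n) t).2
  have hA0 : ∀ n t, 0 ≤ A n t := fun n t => tsum_nonneg fun k => by positivity
  set K : ℕ → ℝ := fun n => Real.sqrt P * (M * ‖b n‖) with hK
  have hK0 : ∀ n, 0 ≤ K n := fun n => by positivity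
  set H : ℕ → ℝ := fun t => ∑' n, Real.sqrt (A n t) * K n with hH
  set D : ℝ := Real.sqrt P * Real.sqrt P * M with hD
  have hDsum : Summable fun n => D * (‖a n‖ * ‖b n‖) := hab.mul_left D
  have hbnd : ∀ n t, Real.sqrt (A n t) * K n ≤ D * (‖a n‖ * ‖b n‖) := by
    intro n t
    have h1 : Real.sqrt (A n t) ≤ Real.sqrt P * ‖a n‖ := by
      refine (Real.sqrt_le_sqrt (hAle n t)).trans ?_
      rw [Real.sqrt_mul hP0, Real.sqrt_sq (norm_nonneg _)]
    calc Real.sqrt (A n t) * K n ≤ (Real.sqrt P * ‖a n‖) * K n :=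
          mul_le_mul_of_nonneg_right h1 (hK0 n)
      _ = D * (‖a n‖ * ‖b n‖) := by rw [hK, hD]; ring
  have hHsum : ∀ t, Summable fun n => Real.sqrt (A n t) * K n := fun t =>
    Summable.of_nonneg_of_le
      (fun n => mul_nonneg (Real.sqrt_nonneg _) (hK0 n)) (fun n => hbnd n t) hDsum
  -- main quantitative bound
  have main : ∀ p : ℕ × ℕ,
      ‖∑' k : ℕ, ⟪u ((k + p.1 : ℕ) : ℤ), (Y.comp (Q p.1 p.2)) (u ((k + p.2 : ℕ) : ℤ))⟫‖
        ≤ H p.1 := by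
    rintro ⟨t, s⟩
    set Qc := Q t s with hQc
    set Bq : ℕ → E := fun n => ContinuousLinearMap.adjoint Qc (b n) with hBq
    have hBqn : ∀ n, ‖Bq n‖ ≤ M * ‖b n‖ := by
      intro n
      calc ‖Bq n‖ ≤ ‖ContinuousLinearMap.adjoint Qc‖ * ‖b n‖ :=
            ContinuousLinearMap.le_opNorm _ _
        _ ≤ M * ‖b n‖ := by
            rw [ContinuousLinearMap.adjoint.norm_map Qc]
            exact mul_le_mul_of_nonneg_right (hM t s) (norm_nonneg _)
    set coef : ℕ → ℕ → ℂ := fun n k =>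
      ⟪b n, Qc (u ((k + s : ℕ) : ℤ))⟫ * ⟪u ((k + t : ℕ) : ℤ), a n⟫ with hcoef
    have hsumY : ∀ z : E, Summable fun n => (⟪b n, Qc z⟫ : ℂ) • a n := by
      intro z
      refine Summable.of_norm_bounded (g := fun n => M * ‖z‖ * (‖a n‖ * ‖b n‖))
        (hab.mul_left (M * ‖z‖)) fun n => ?_
      have h1 : ‖(⟪b n, Qc z⟫ : ℂ)‖ ≤ ‖b n‖ * (M * ‖z‖) := by
        refine (norm_inner_le_norm _ _).trans ?_
        refine mul_le_mul_of_nonneg_left ?_ (norm_nonneg _)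
        exact (Qc.le_opNorm z).trans
          (mul_le_mul_of_nonneg_right (hM t s) (norm_nonneg z))
      calc ‖(⟪b n, Qc z⟫ : ℂ) • a n‖ = ‖(⟪b n, Qc z⟫ : ℂ)‖ * ‖a n‖ := norm_smul _ _
        _ ≤ (‖b n‖ * (M * ‖z‖)) * ‖a n‖ := mul_le_mul_of_nonneg_right h1 (norm_nonneg _)
        _ = M * ‖z‖ * (‖a n‖ * ‖b n‖) := by ring
    have hterm : ∀ k : ℕ,
        (⟪u ((k + t : ℕ) : ℤ), (Y.comp Qc) (u ((k + s : ℕ) : ℤ))⟫ : ℂ) = ∑' n, coef n k := by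
      intro k
      rw [ContinuousLinearMap.comp_apply, hrep (Qc (u ((k + s : ℕ) : ℤ)))]
      have h1 := ContinuousLinearMap.map_tsum (innerSL ℂ (u ((k + t : ℕ) : ℤ)))
        (hsumY (u ((k + s : ℕ) : ℤ)))
      simp only [innerSL_apply_apply] at h1
      rw [h1]
      refine tsum_congr fun n => ?_
      rw [inner_smul_right]
    set xa : ℕ → ℕ → ℝ := fun n k => ‖⟪a n, u ((k + t : ℕ) : ℤ)⟫‖ with hxa
    set xb : ℕ → ℕ → ℝ := fun n k => ‖⟪Bq n, u ((k + s : ℕ) : ℤ)⟫‖ with hxb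
    have hcoefnorm : ∀ n k, ‖coef n k‖ = xb n k * xa n k := by
      intro n k
      simp only [hcoef, hxa, hxb, hBq]
      rw [norm_mul]
      congr 1
      · rw [ContinuousLinearMap.adjoint_inner_left]
      · exact norm_inner_symm _ _
    have hxasq : ∀ n, Summable fun k => xa n k ^ 2 := fun n => (L2 (a n) t).1
    have hxbsq : ∀ n, Summable fun k => xb n k ^ 2 := fun n => (L2 (Bq n) s).1
    have hCS : ∀ n, Summable (fun k => xb n k * xa n k) ∧
        ∑' k, xb n k * xa n k
          ≤ Real.sqrt (∑' k, xb n k ^ 2) * Real.sqrt (∑' k, xa n k ^ 2) :=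
      fun n => ZAux.tsum_cauchy_schwarz _ _ (fun k => norm_nonneg _)
        (fun k => norm_nonneg _) (hxbsq n) (hxasq n)
    have hgbound : ∀ n, ∑' k, xb n k * xa n k ≤ Real.sqrt (A n t) * K n := by
      intro n
      refine (hCS n).2.trans ?_
      have e1 : (∑' k, xa n k ^ 2) = A n t := rfl
      have e2 : Real.sqrt (∑' k, xb n k ^ 2) ≤ K n := by
        have h1 : (∑' k, xb n k ^ 2) ≤ P * (M * ‖b n‖) ^ 2 := by
          refine (L2 (Bq n) s).2.trans ?_
          exact mul_le_mul_of_nonneg_left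
            (pow_le_pow_left₀ (norm_nonneg _) (hBqn n) 2) hP0
        refine (Real.sqrt_le_sqrt h1).trans ?_
        rw [Real.sqrt_mul hP0, Real.sqrt_sq (mul_nonneg hM0 (norm_nonneg _))]
      rw [e1, mul_comm]
      exact mul_le_mul_of_nonneg_left e2 (Real.sqrt_nonneg _)
    have hgsummable : Summable (fun n => ∑' k, xb n k * xa n k) :=
      Summable.of_nonneg_of_le
        (fun n => tsum_nonneg fun k => mul_nonneg (norm_nonneg _) (norm_nonneg _))
        (fun n => (hgbound n).trans (hbnd n t)) hDsum
    set cfun : ℕ × ℕ → ℝ := fun q => xb q.1 q.2 * xa q.1 q.2 with hcfun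
    have hc0 : ∀ q, 0 ≤ cfun q := fun q => mul_nonneg (norm_nonneg _) (norm_nonneg _)
    have hprodsum : Summable cfun :=
      (summable_prod_of_nonneg hc0).mpr ⟨fun n => (hCS n).1, hgsummable⟩
    have hswap : Summable (fun q : ℕ × ℕ => cfun q.swap) := hprodsum.prod_symm
    have hswap2 := (summable_prod_of_nonneg (fun q => hc0 q.swap)).mp hswap
    have htsum_eq : ∑' k, ∑' n, xb n k * xa n k = ∑' n, ∑' k, xb n k * xa n k := by
      have e1 : ∑' (q : ℕ × ℕ), cfun q.swap = ∑' k, ∑' n, xb n k * xa n k :=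
        Summable.tsum_prod' hswap hswap2.1
      have e2 : ∑' (q : ℕ × ℕ), cfun q = ∑' n, ∑' k, xb n k * xa n k :=
        Summable.tsum_prod' hprodsum (fun n => (hCS n).1)
      have e3 : ∑' (q : ℕ × ℕ), cfun q.swap = ∑' (q : ℕ × ℕ), cfun q :=
        (Equiv.prodComm ℕ ℕ).tsum_eq cfun
      rw [← e1, e3, e2]
    have htermbound : ∀ k,
        ‖(⟪u ((k + t : ℕ) : ℤ), (Y.comp Qc) (u ((k + s : ℕ) : ℤ))⟫ : ℂ)‖
          ≤ ∑' n, xb n k * xa n k := by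
      intro k
      rw [hterm k]
      refine (norm_tsum_le_tsum_norm ?_).trans ?_
      · exact (hswap2.1 k).congr fun n => (hcoefnorm n k).symm
      · exact le_of_eq (tsum_congr fun n => hcoefnorm n k)
    have hterm_sum : Summable fun k =>
        ‖(⟪u ((k + t : ℕ) : ℤ), (Y.comp Qc) (u ((k + s : ℕ) : ℤ))⟫ : ℂ)‖ :=
      Summable.of_nonneg_of_le (fun k => norm_nonneg _) htermbound hswap2.2
    calc ‖∑' k : ℕ, (⟪u ((k + t : ℕ) : ℤ), (Y.comp Qc) (u ((k + s : ℕ) : ℤ))⟫ : ℂ)‖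
        ≤ ∑' k, ‖(⟪u ((k + t : ℕ) : ℤ), (Y.comp Qc) (u ((k + s : ℕ) : ℤ))⟫ : ℂ)‖ :=
          norm_tsum_le_tsum_norm hterm_sum
      _ ≤ ∑' k, ∑' n, xb n k * xa n k := Summable.tsum_le_tsum htermbound hterm_sum hswap2.2
      _ = ∑' n, ∑' k, xb n k * xa n k := htsum_eq
      _ ≤ ∑' n, Real.sqrt (A n t) * K n := Summable.tsum_le_tsum hgbound hgsummable (hHsum t)
      _ = H t := rfl
  -- the majorant tends to 0
  have hHto : Tendsto H atTop (𝓝 0) := by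
    have h0 : (0 : ℝ) = ∑' _ : ℕ, (0 : ℝ) := by simp
    rw [hH, h0]
    refine tendsto_tsum_of_dominated_convergence hDsum (fun n => ?_)
      (Filter.Eventually.of_forall fun t n => ?_)
    · have hAto : Tendsto (fun t => A n t) atTop (𝓝 0) := tendsto_sum_nat_add (w n)
      have hsq : Tendsto (fun t => Real.sqrt (A n t)) atTop (𝓝 0) := by
        have := (Real.continuous_sqrt.tendsto 0).comp hAto
        simpa [Real.sqrt_zero, Function.comp_def] using this
      simpa using hsq.mul_const (K n)
    · rw [Real.norm_eq_abs, _root_.abs_of_nonneg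
        (mul_nonneg (Real.sqrt_nonneg _) (hK0 n))]
      exact hbnd n t
  have hfst : Tendsto (fun p : ℕ × ℕ => p.1) atTop atTop := by
    rw [← Filter.prod_atTop_atTop_eq]
    exact tendsto_fst
  refine squeeze_zero_norm ?_ (hHto.comp hfst)
  intro p
  simp only [hcoe]
  exact main p
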